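/- Let N ≥ 1 and let p_{ij}, d_{ij} : ℝ^N → ℝ (1 ≤ i,j ≤ N) be nonnegative, twice continuously differentiable functions with p_{ij}(z) = d_{ji}(z) and p_{ii}(z) = d_{ii}(z) = 0 for all z. Set P_i = Σ_j p_{ij}, D_i = Σ_j d_{ij}. Let y : [t_n, t_n + T] → ℝ^N solve y_i' = P_i(y) − D_i(y) with y(t_n) = yⁿ, all yⁿ_i > 0. Let a21, b1, b2 ≥ 0 with b1 + b2 = 1 and a21·b2 = 1/2. Suppose π, σ : (0,T) → ℝ^N take positive values and satisfy π_i(Δt) = yⁿ_i + O(Δt) and σ_i(Δt) = yⁿ_i + Δt·(P_i(yⁿ) − D_i(yⁿ)) + O(Δt²) as Δt → 0⁺. Suppose Y2, Y : (0,T) → ℝ^N satisfy, for every Δt ∈ (0,T) and every i: Y2_i = yⁿ_i + a21·Δt Σ_j ( p_{ij}(yⁿ)·Y2_j/π_j − d_{ij}(yⁿ)·Y2_i/π_i ) and Y_i = yⁿ_i + Δt Σ_j ( (b1·p_{ij}(yⁿ) + b2·p_{ij}(Y2))·Y_j/σ_j − (b1·d_{ij}(yⁿ) + b2·d_{ij}(Y2))·Y_i/σ_i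 ). Then Y_i(Δt) = y_i(t_n + Δt) + O(Δt³) as Δt → 0⁺ for every i. (Sufficiency of the order conditions for second-order accuracy of two-stage MPRK schemes with conservative stage, δ = 1.) -/

import Mathlib

/-- `f(Δt) = O(Δt^m)` as `Δt → 0⁺`. -/
def BigOAtZero (f : ℝ → ℝ) (m : ℕ) : Prop :=
  ∃ C > 0, ∃ δ > 0, ∀ t : ℝ, 0 < t → t < δ → |f t| ≤ C * t ^ m

/-- Eventually for small positive arguments. -/
def Ev (Q : ℝ → Prop) : Prop := ∃ δ > 0, ∀ t : ℝ, 0 < t → t < δ → Q t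

lemma ev_const {Q : ℝ → Prop} (h : ∀ t, 0 < t → Q t) : Ev Q :=
  ⟨1, one_pos, fun t ht _ => h t ht⟩

lemma Ev.and {Q R : ℝ → Prop} (hQ : Ev Q) (hR : Ev R) : Ev (fun t => Q t ∧ R t) := by
  obtain ⟨δ1, h1, H1⟩ := hQ; obtain ⟨δ2, h2, H2⟩ := hR
  exact ⟨min δ1 δ2, lt_min h1 h2, fun t ht hlt =>
    ⟨H1 t ht (hlt.trans_le (min_le_left _ _)), H2 t ht (hlt.trans_le (min_le_right _ _))⟩⟩

lemma Ev.mono {Q R : ℝ → Prop} (hQ : Ev Q) (h : ∀ t, 0 < t → Q t → R t) : Ev R := by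
  obtain ⟨δ1, h1, H1⟩ := hQ
  exact ⟨δ1, h1, fun t ht hlt => h t ht (H1 t ht hlt)⟩

lemma ev_lt {c : ℝ} (hc : 0 < c) : Ev (fun t => t < c) := ⟨c, hc, fun t _ h => h⟩

lemma ev_mul_lt {α β : ℝ} (hα : 0 ≤ α) (hβ : 0 < β) : Ev (fun t => α * t < β) := by
  refine ⟨β / (α + 1), by positivity, fun t ht hlt => ?_⟩
  rw [lt_div_iff₀ (by positivity)] at hlt
  nlinarith

lemma ev_ball {ι : Type*} {s : Finset ι} {Q : ι → ℝ → Prop} (h : ∀ i ∈ s, Ev (Q i)) :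
    Ev (fun t => ∀ i ∈ s, Q i t) := by
  classical
  induction s using Finset.induction with
  | empty => exact ev_const (by simp)
  | @insert a s ha ih =>
    have h1 := h a (Finset.mem_insert_self a s)
    have h2 := ih (fun i hi => h i (Finset.mem_insert_of_mem hi))
    exact (h1.and h2).mono (by
      intro t _ ⟨hQ, hall⟩ i hi
      rcases Finset.mem_insert.mp hi with rfl | hi
      · exact hQ
      · exact hall i hi)

lemma ev_forall {ι : Type*} [Fintype ι] {Q : ι → ℝ → Prop} (h : ∀ i, Ev (Q i)) :
    Ev (fun t => ∀ i, Q i t) :=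
  (ev_ball (s := Finset.univ) (fun i _ => h i)).mono (by intro t _ h i; exact h i (Finset.mem_univ i))

lemma bigO_iff {f : ℝ → ℝ} {m : ℕ} : BigOAtZero f m ↔ ∃ C > 0, Ev (fun t => |f t| ≤ C * t ^ m) :=
  Iff.rfl

lemma bigO_of_ev {f : ℝ → ℝ} {m : ℕ} {C : ℝ} (h : Ev (fun t => |f t| ≤ C * t ^ m)) :
    BigOAtZero f m := by
  obtain ⟨δ, hδ, H⟩ := h
  refine ⟨max C 1, lt_of_lt_of_le one_pos (le_max_right _ _), δ, hδ, fun t ht hlt => ?_⟩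
  exact (H t ht hlt).trans (mul_le_mul_of_nonneg_right (le_max_left _ _) (by positivity))

lemma BigOAtZero.ev {f : ℝ → ℝ} {m : ℕ} (h : BigOAtZero f m) :
    ∃ C > 0, Ev (fun t => |f t| ≤ C * t ^ m) := h

lemma bigO_congr_ev {f g : ℝ → ℝ} {m : ℕ} (hfg : Ev (fun t => f t = g t))
    (hg : BigOAtZero g m) : BigOAtZero f m := by
  obtain ⟨C, hC, hEv⟩ := hg.ev
  exact ⟨C, hC, (hfg.and hEv).mono (fun t _ ⟨h1, h2⟩ => h1 ▸ h2) ⟩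

lemma BigOAtZero.of_abs_le {f g : ℝ → ℝ} {m : ℕ} {c : ℝ} (hf : BigOAtZero f m)
    (h : Ev (fun t => |g t| ≤ c * |f t|)) : BigOAtZero g m := by
  obtain ⟨C, hC, hEv⟩ := hf.ev
  refine bigO_of_ev (C := (|c| + 1) * C) (((h.and hEv).mono ?_))
  intro t ht ⟨h1, h2⟩
  have : c * |f t| ≤ (|c| + 1) * (C * t ^ m) := by
    have h3 : c * |f t| ≤ |c| * |f t| := mul_le_mul_of_nonneg_right (le_abs_self c) (abs_nonneg _)
    have h4 : |c| * |f t| ≤ |c| * (C * t ^ m) := mul_le_mul_of_nonneg_left h2 (abs_nonneg _)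
    nlinarith [abs_nonneg (f t), pow_nonneg ht.le m, mul_pos hC (pow_pos ht m)]
  calc |g t| ≤ c * |f t| := h1
    _ ≤ (|c| + 1) * (C * t ^ m) := this
    _ = (|c| + 1) * C * t ^ m := by ring

lemma BigOAtZero.add {f g : ℝ → ℝ} {m : ℕ} (hf : BigOAtZero f m) (hg : BigOAtZero g m) :
    BigOAtZero (fun t => f t + g t) m := by
  obtain ⟨C, hC, hEv⟩ := hf.ev; obtain ⟨C', hC', hEv'⟩ := hg.ev
  refine bigO_of_ev (C := C + C') ((hEv.and hEv').mono ?_)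
  intro t ht ⟨h1, h2⟩
  calc |f t + g t| ≤ |f t| + |g t| := abs_add_le _ _
    _ ≤ C * t ^ m + C' * t ^ m := add_le_add h1 h2
    _ = (C + C') * t ^ m := by ring

lemma BigOAtZero.neg {f : ℝ → ℝ} {m : ℕ} (hf : BigOAtZero f m) :
    BigOAtZero (fun t => -(f t)) m := by
  obtain ⟨C, hC, hEv⟩ := hf.ev
  exact ⟨C, hC, by simpa [Ev] using hEv⟩

lemma BigOAtZero.sub {f g : ℝ → ℝ} {m : ℕ} (hf : BigOAtZero f m) (hg : BigOAtZero g m) :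
    BigOAtZero (fun t => f t - g t) m := by
  simpa [sub_eq_add_neg] using hf.add hg.neg

lemma BigOAtZero.const_mul {f : ℝ → ℝ} {m : ℕ} (c : ℝ) (hf : BigOAtZero f m) :
    BigOAtZero (fun t => c * f t) m :=
  hf.of_abs_le (c := |c|) (ev_const fun t _ => le_of_eq (abs_mul c (f t)))

lemma BigOAtZero.mul {f g : ℝ → ℝ} {a b : ℕ} (hf : BigOAtZero f a) (hg : BigOAtZero g b) :
    BigOAtZero (fun t => f t * g t) (a + b) := by
  obtain ⟨C, hC, hEv⟩ := hf.ev; obtain ⟨C', hC', hEv'⟩ := hg.ev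
  refine bigO_of_ev (C := C * C') ((hEv.and hEv').mono ?_)
  intro t ht ⟨h1, h2⟩
  have := mul_le_mul h1 h2 (abs_nonneg _) (by positivity)
  calc |f t * g t| = |f t| * |g t| := abs_mul _ _
    _ ≤ C * t ^ a * (C' * t ^ b) := this
    _ = C * C' * t ^ (a + b) := by ring

lemma bigO_id : BigOAtZero (fun t => t) 1 :=
  ⟨1, one_pos, 1, one_pos, fun t ht _ => by rw [abs_of_pos ht]; nlinarith⟩

lemma bigO_abs {f : ℝ → ℝ} {m : ℕ} (hf : BigOAtZero f m) : BigOAtZero (fun t => |f t|) m := by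
  obtain ⟨C, hC, hEv⟩ := hf.ev
  exact ⟨C, hC, by simpa [Ev, abs_abs] using hEv⟩

lemma bigO_sum {ι : Type*} {s : Finset ι} {F : ι → ℝ → ℝ} {m : ℕ}
    (h : ∀ i ∈ s, BigOAtZero (F i) m) : BigOAtZero (fun t => ∑ i ∈ s, F i t) m := by
  classical
  induction s using Finset.induction with
  | empty => exact ⟨1, one_pos, 1, one_pos, fun t ht _ => by simp; positivity⟩
  | @insert a s ha ih =>
    have h1 := h a (Finset.mem_insert_self a s)
    have h2 := ih (fun i hi => h i (Finset.mem_insert_of_mem hi))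
    have := h1.add h2
    refine bigO_congr_ev (ev_const fun t _ => ?_) this
    rw [Finset.sum_insert ha]

lemma BigOAtZero.of_succ {f : ℝ → ℝ} {m : ℕ} (hf : BigOAtZero f (m + 1)) : BigOAtZero f m := by
  obtain ⟨C, hC, hEv⟩ := hf.ev
  refine bigO_of_ev (C := C) ((hEv.and (ev_lt one_pos)).mono ?_)
  intro t ht ⟨h1, h2⟩
  refine h1.trans (mul_le_mul_of_nonneg_left ?_ hC.le)
  calc t ^ (m + 1) = t ^ m * t := pow_succ t m
    _ ≤ t ^ m * 1 := by nlinarith [pow_nonneg ht.le m]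
    _ = t ^ m := mul_one _

lemma ev_abs_le_of_bigO1 {f : ℝ → ℝ} (h : BigOAtZero f 1) {ρ : ℝ} (hρ : 0 < ρ) :
    Ev (fun t => |f t| ≤ ρ) := by
  obtain ⟨C, hC, hEv⟩ := h.ev
  refine (hEv.and (ev_lt (show (0:ℝ) < ρ / C by positivity))).mono ?_
  intro t ht ⟨h1, hlt2⟩
  have h3 : C * t ≤ ρ := by rw [lt_div_iff₀ hC] at hlt2; nlinarith
  exact h1.trans (by simpa using h3)

lemma bigO_pi_norm {N : ℕ} {V : ℝ → Fin N → ℝ} {m : ℕ}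
    (h : ∀ j, BigOAtZero (fun t => V t j) m) : BigOAtZero (fun t => ‖V t‖) m := by
  have hsum : BigOAtZero (fun t => ∑ j, |V t j|) m := bigO_sum (fun j _ => bigO_abs (h j))
  refine hsum.of_abs_le (c := 1) (ev_const fun t _ => ?_)
  have h1 : ‖V t‖ ≤ ∑ j, |V t j| := by
    refine (pi_norm_le_iff_of_nonneg (by positivity)).mpr fun i => ?_
    rw [Real.norm_eq_abs]
    exact Finset.single_le_sum (fun j _ => abs_nonneg (V t j)) (Finset.mem_univ i)
  rw [abs_of_nonneg (norm_nonneg (V t)), one_mul]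
  exact h1.trans (le_abs_self _)

/-- Second-order Taylor bound from a modulus on the second derivative. -/
lemma taylor2_bound {φ ψ χ : ℝ → ℝ} {a Δt K : ℝ} (hΔt : 0 < Δt) (hK : 0 ≤ K)
    (hφ : ∀ t ∈ Set.Icc a (a + Δt), HasDerivWithinAt φ (ψ t) (Set.Icc a (a + Δt)) t)
    (hψ : ∀ t ∈ Set.Icc a (a + Δt), HasDerivWithinAt ψ (χ t) (Set.Icc a (a + Δt)) t)
    (hχ : ∀ t ∈ Set.Icc a (a + Δt), |χ t - χ a| ≤ K) :
    |φ (a + Δt) - φ a - Δt * ψ a - Δt ^ 2 / 2 * χ a| ≤ K * Δt ^ 2 := by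
  set s := Set.Icc a (a + Δt) with hs
  have hconv : Convex ℝ s := convex_Icc _ _
  have has : a ∈ s := Set.left_mem_Icc.mpr (by linarith)
  have hbs : a + Δt ∈ s := Set.right_mem_Icc.mpr (by linarith)
  -- the function q t = ψ t - ψ a - (t - a) * χ a
  set q : ℝ → ℝ := fun t => ψ t - ψ a - (t - a) * χ a with hq
  have hq' : ∀ t ∈ s, HasDerivWithinAt q (χ t - χ a) s t := by
    intro t ht
    have h1 : HasDerivWithinAt (fun t : ℝ => (t - a) * χ a) (1 * χ a) s t :=
      ((hasDerivWithinAt_id t s).sub_const a).mul_const (χ a)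
    convert ((hψ t ht).sub_const (ψ a)).sub (by simpa using h1) using 1
    all_goals rfl
  have hqb : ∀ t ∈ s, |q t| ≤ K * (t - a) := by
    intro t ht
    have := Convex.norm_image_sub_le_of_norm_hasDerivWithin_le hq'
      (fun x hx => by simpa [Real.norm_eq_abs] using hχ x hx) hconv has ht
    have hq0 : q a = 0 := by simp [hq]
    have hta : 0 ≤ t - a := by have := ht.1; linarith
    simpa [hq0, Real.norm_eq_abs, abs_of_nonneg hta] using this
  -- the function r
  set r : ℝ → ℝ := fun t => φ t - φ a - (t - a) * ψ a - (t - a) ^ 2 / 2 * χ a with hr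
  have hr' : ∀ t ∈ s, HasDerivWithinAt r (q t) s t := by
    intro t ht
    have h1 : HasDerivWithinAt (fun t : ℝ => (t - a) * ψ a) (1 * ψ a) s t :=
      ((hasDerivWithinAt_id t s).sub_const a).mul_const (ψ a)
    have h2 : HasDerivWithinAt (fun t : ℝ => (t - a) ^ 2 / 2 * χ a)
        ((2 * (t - a) ^ 1 * 1 / 2) * χ a) s t := by
      exact ((((hasDerivWithinAt_id t s).sub_const a).pow 2).div_const 2).mul_const (χ a)
    have := (((hφ t ht).sub_const (φ a)).sub (by simpa using h1)).sub (by simpa using h2)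
    convert this using 1
    all_goals rfl
  have hrb := Convex.norm_image_sub_le_of_norm_hasDerivWithin_le (C := K * Δt) hr'
    (fun x hx => by
      rw [Real.norm_eq_abs]
      refine (hqb x hx).trans ?_
      have hx2 := hx.2
      have hx1 := hx.1
      nlinarith)
    hconv has hbs
  have hr0 : r a = 0 := by simp [hr]
  have : |r (a + Δt)| ≤ K * Δt * |Δt| := by simpa [hr0, Real.norm_eq_abs] using hrb
  rw [abs_of_pos hΔt] at this
  calc |φ (a + Δt) - φ a - Δt * ψ a - Δt ^ 2 / 2 * χ a| = |r (a + Δt)| := by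
        rw [hr]; ring_nf
    _ ≤ K * Δt * Δt := this
    _ = K * Δt ^ 2 := by ring

/-- Positivity for the Patankar linear system. -/
lemma system_pos {N : ℕ} (hN : 1 ≤ N) {A B : Fin N → Fin N → ℝ} {c w u : Fin N → ℝ} {τ : ℝ}
    (hτ : 0 ≤ τ) (hA : ∀ i j, 0 ≤ A i j) (hB : ∀ i j, 0 ≤ B i j)
    (hc : ∀ i, 0 < c i) (hw : ∀ i, 0 < w i)
    (hcoef : ∀ i, τ * (∑ j, A i j) < w i)
    (heq : ∀ i, u i = c i + τ * ∑ j, (A i j * u j / w j - B i j * u i / w i)) :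
    ∀ i, 0 < u i := by
  have hNE : Nonempty (Fin N) := ⟨⟨0, by omega⟩⟩
  set x : Fin N → ℝ := fun j => u j / w j with hx
  obtain ⟨i0, -, hmin⟩ := Finset.exists_min_image Finset.univ x Finset.univ_nonempty
  have hmin' : ∀ j, x i0 ≤ x j := fun j => hmin j (Finset.mem_univ j)
  have hkey : 0 < x i0 := by
    by_contra hneg
    push_neg at hneg
    have hui0 : u i0 = w i0 * x i0 := by
      rw [hx]
      show u i0 = w i0 * (u i0 / w i0)
      rw [← mul_div_assoc]
      exact (mul_div_cancel_left₀ (u i0) (hw i0).ne').symm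
    have hsum : ∑ j, (A i0 j * u j / w j - B i0 j * u i0 / w i0)
        ≥ ∑ j, (A i0 j * x i0 - B i0 j * x i0) := by
      refine Finset.sum_le_sum fun j _ => ?_
      have h1 : A i0 j * x i0 ≤ A i0 j * x j := mul_le_mul_of_nonneg_left (hmin' j) (hA i0 j)
      have h2 : A i0 j * u j / w j = A i0 j * x j := by rw [hx, mul_div_assoc]
      have h3 : B i0 j * u i0 / w i0 = B i0 j * x i0 := by rw [hx, mul_div_assoc]
      rw [h2, h3]
      linarith
    have heqq := heq i0
    have hsum2 : ∑ j, (A i0 j * x i0 - B i0 j * x i0)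
        = (∑ j, A i0 j) * x i0 - (∑ j, B i0 j) * x i0 := by
      rw [Finset.sum_sub_distrib, Finset.sum_mul, Finset.sum_mul]
    have hBs : 0 ≤ ∑ j, B i0 j := Finset.sum_nonneg fun j _ => hB i0 j
    have h4 : w i0 * x i0 ≥ c i0 + τ * ((∑ j, A i0 j) * x i0 - (∑ j, B i0 j) * x i0) := by
      have h5 : (∑ j, A i0 j) * x i0 - (∑ j, B i0 j) * x i0
          ≤ ∑ j, (A i0 j * u j / w j - B i0 j * u i0 / w i0) := by
        rw [← hsum2]; exact hsum
      have h6 := mul_le_mul_of_nonneg_left h5 hτ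
      linarith [hui0, heqq]
    have hcf := hcoef i0
    have hci := hc i0
    nlinarith [mul_nonneg hτ hBs, mul_nonneg (mul_nonneg hτ hBs) (neg_nonneg.mpr hneg)]
  intro i
  have : 0 < x i := lt_of_lt_of_le hkey (hmin' i)
  have := mul_pos (hw i) this
  calc (0:ℝ) < w i * (u i / w i) := this
    _ = u i := by rw [← mul_div_assoc]; exact mul_div_cancel_left₀ (u i) (hw i).ne'

/-- Conservation for the Patankar linear system. -/
lemma system_sum {N : ℕ} {A B : Fin N → Fin N → ℝ} {c w u : Fin N → ℝ} {τ : ℝ}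
    (hAB : ∀ i j, A i j = B j i)
    (heq : ∀ i, u i = c i + τ * ∑ j, (A i j * u j / w j - B i j * u i / w i)) :
    ∑ i, u i = ∑ i, c i := by
  have hzero : ∑ i, ∑ j, (A i j * u j / w j - B i j * u i / w i) = 0 := by
    have h1 : ∑ i, ∑ j, (A i j * u j / w j) = ∑ i, ∑ j, (B i j * u i / w i) := by
      have : ∑ i, ∑ j, (A i j * u j / w j) = ∑ i, ∑ j, (B j i * u j / w j) := by
        refine Finset.sum_congr rfl fun i _ => Finset.sum_congr rfl fun j _ => by rw [hAB]
      rw [this, Finset.sum_comm]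
    calc ∑ i, ∑ j, (A i j * u j / w j - B i j * u i / w i)
        = ∑ i, (∑ j, A i j * u j / w j - ∑ j, B i j * u i / w i) := by
          refine Finset.sum_congr rfl fun i _ => Finset.sum_sub_distrib _ _
      _ = ∑ i, ∑ j, (A i j * u j / w j) - ∑ i, ∑ j, (B i j * u i / w i) :=
          Finset.sum_sub_distrib _ _
      _ = 0 := by rw [h1]; ring
  calc ∑ i, u i = ∑ i, (c i + τ * ∑ j, (A i j * u j / w j - B i j * u i / w i)) :=
        Finset.sum_congr rfl fun i _ => heq i
    _ = ∑ i, c i + τ * ∑ i, ∑ j, (A i j * u j / w j - B i j * u i / w i) := by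
        rw [Finset.sum_add_distrib, ← Finset.mul_sum]
    _ = ∑ i, c i := by rw [hzero]; ring

/-- A `C²` function is Lipschitz on some closed ball around a point. -/
lemma lip_ball {N : ℕ} {F : (Fin N → ℝ) → ℝ} (hF : ContDiff ℝ 2 F) (x0 : Fin N → ℝ) :
    ∃ L > 0, ∃ ρ > 0, ∀ z z', z ∈ Metric.closedBall x0 ρ → z' ∈ Metric.closedBall x0 ρ →
      |F z - F z'| ≤ L * ‖z - z'‖ := by
  obtain ⟨K, s, hs, hlip⟩ := (hF.contDiffAt.of_le one_le_two).exists_lipschitzOnWith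
  obtain ⟨ε, hε, hball⟩ := Metric.mem_nhds_iff.mp hs
  refine ⟨K + 1, by positivity, ε / 2, by positivity, fun z z' hz hz' => ?_⟩
  have hzs : z ∈ s := hball (lt_of_le_of_lt (Metric.mem_closedBall.mp hz) (by linarith))
  have hz's : z' ∈ s := hball (lt_of_le_of_lt (Metric.mem_closedBall.mp hz') (by linarith))
  have := hlip.dist_le_mul z hzs z' hz's
  rw [dist_eq_norm, dist_eq_norm] at this
  rw [Real.norm_eq_abs] at this
  refine this.trans (mul_le_mul_of_nonneg_right ?_ (norm_nonneg _))
  exact_mod_cast le_of_lt (lt_add_one (K : ℝ))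

/-- Quadratic approximation of a `C²` function near a point. -/
lemma quad_approx {N : ℕ} {F : (Fin N → ℝ) → ℝ} (hF : ContDiff ℝ 2 F) (x0 : Fin N → ℝ) :
    ∃ L > 0, ∃ ρ > 0, ∀ z ∈ Metric.closedBall x0 ρ,
      |F z - F x0 - fderiv ℝ F x0 (z - x0)| ≤ L * ‖z - x0‖ ^ 2 := by
  have hd : ContDiff ℝ 1 (fderiv ℝ F) := hF.fderiv_right (le_refl _)
  obtain ⟨K, s, hs, hlip⟩ := hd.contDiffAt.exists_lipschitzOnWith
  obtain ⟨ε, hε, hball⟩ := Metric.mem_nhds_iff.mp hs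
  refine ⟨K + 1, by positivity, ε / 2, by positivity, fun z hz => ?_⟩
  have hsub : Metric.closedBall x0 ‖z - x0‖ ⊆ s := by
    intro w hw
    refine hball ?_
    have h1 : dist w x0 ≤ ‖z - x0‖ := Metric.mem_closedBall.mp hw
    have h2 : ‖z - x0‖ ≤ ε / 2 := by
      have := Metric.mem_closedBall.mp hz
      rwa [dist_eq_norm] at this
    exact Metric.mem_ball.mpr (lt_of_le_of_lt (h1.trans h2) (by linarith))
  have hconv : Convex ℝ (Metric.closedBall x0 ‖z - x0‖) := convex_closedBall _ _
  have hdiff : ∀ w ∈ Metric.closedBall x0 ‖z - x0‖,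
      HasFDerivWithinAt F (fderiv ℝ F w) (Metric.closedBall x0 ‖z - x0‖) w := fun w _ =>
    ((hF.differentiable (by norm_num)) w).hasFDerivAt.hasFDerivWithinAt
  have hbound : ∀ w ∈ Metric.closedBall x0 ‖z - x0‖,
      ‖fderiv ℝ F w - fderiv ℝ F x0‖ ≤ (K + 1) * ‖z - x0‖ := by
    intro w hw
    have hws : w ∈ s := hsub hw
    have hx0s : x0 ∈ s := hball (Metric.mem_ball_self hε)
    have := hlip.dist_le_mul w hws x0 hx0s
    rw [dist_eq_norm, dist_eq_norm] at this
    refine this.trans ?_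
    have h1 : ‖w - x0‖ ≤ ‖z - x0‖ := by
      have := Metric.mem_closedBall.mp hw
      rwa [dist_eq_norm] at this
    have hK1 : (K : ℝ) ≤ K + 1 := by linarith [K.coe_nonneg]
    exact mul_le_mul hK1 h1 (norm_nonneg _) (by positivity)
  have hzball : z ∈ Metric.closedBall x0 ‖z - x0‖ :=
    Metric.mem_closedBall.mpr (le_of_eq (dist_eq_norm z x0))
  have hx0ball : x0 ∈ Metric.closedBall x0 ‖z - x0‖ := Metric.mem_closedBall_self (norm_nonneg _)
  have := hconv.norm_image_sub_le_of_norm_hasFDerivWithin_le' hdiff hbound hx0ball hzball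
  rw [Real.norm_eq_abs] at this
  refine this.trans (le_of_eq ?_)
  ring

lemma bigO_const (c : ℝ) : BigOAtZero (fun _ => c) 0 :=
  bigO_of_ev (C := |c|) (ev_const fun t _ => by simp)

lemma bigO_zero_of_ev {f : ℝ → ℝ} {M : ℝ} (h : Ev (fun t => |f t| ≤ M)) : BigOAtZero f 0 :=
  bigO_of_ev (C := M) (h.mono fun t _ h1 => by simpa using h1)

theorem stmt_14 (N : ℕ) (hN : 1 ≤ N)
    (p d : Fin N → Fin N → (Fin N → ℝ) → ℝ)
    (hpnn : ∀ i j z, 0 ≤ p i j z) (hdnn : ∀ i j z, 0 ≤ d i j z)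
    (hpC2 : ∀ i j, ContDiff ℝ 2 (p i j)) (hdC2 : ∀ i j, ContDiff ℝ 2 (d i j))
    (hcons : ∀ i j z, p i j z = d j i z)
    (hpdiag : ∀ i z, p i i z = 0) (hddiag : ∀ i z, d i i z = 0)
    (P D : Fin N → (Fin N → ℝ) → ℝ)
    (hP : ∀ i z, P i z = ∑ j, p i j z) (hD : ∀ i z, D i z = ∑ j, d i j z)
    (tn T : ℝ) (hT : 0 < T)
    (y : ℝ → Fin N → ℝ)
    (hy : ∀ (i : Fin N), ∀ t ∈ Set.Icc tn (tn + T),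
      HasDerivWithinAt (fun s => y s i) (P i (y t) - D i (y t)) (Set.Icc tn (tn + T)) t)
    (yn : Fin N → ℝ) (hyn : y tn = yn) (hynpos : ∀ i, 0 < yn i)
    (a21 b1 b2 : ℝ) (ha21 : 0 ≤ a21) (hb1 : 0 ≤ b1) (hb2 : 0 ≤ b2)
    (hbsum : b1 + b2 = 1) (hab : a21 * b2 = 1 / 2)
    (piw σ : ℝ → Fin N → ℝ)
    (hpiwpos : ∀ Δt, 0 < Δt → Δt < T → ∀ i, 0 < piw Δt i)
    (hσpos : ∀ Δt, 0 < Δt → Δt < T → ∀ i, 0 < σ Δt i)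
    (hpiwO : ∀ i, BigOAtZero (fun Δt => piw Δt i - yn i) 1)
    (hσO : ∀ i, BigOAtZero (fun Δt => σ Δt i - (yn i + Δt * (P i yn - D i yn))) 2)
    (Y2 Y : ℝ → Fin N → ℝ)
    (hY2 : ∀ Δt, 0 < Δt → Δt < T → ∀ i,
      Y2 Δt i = yn i + a21 * Δt * ∑ j,
        (p i j yn * Y2 Δt j / piw Δt j - d i j yn * Y2 Δt i / piw Δt i))
    (hY : ∀ Δt, 0 < Δt → Δt < T → ∀ i,
      Y Δt i = yn i + Δt * ∑ j,
        ((b1 * p i j yn + b2 * p i j (Y2 Δt)) * Y Δt j / σ Δt j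
          - (b1 * d i j yn + b2 * d i j (Y2 Δt)) * Y Δt i / σ Δt i)) :
    ∀ i, BigOAtZero (fun Δt => Y Δt i - y (tn + Δt) i) 3 := by
  classical
  haveI hNE : Nonempty (Fin N) := ⟨⟨0, by omega⟩⟩
  set S : ℝ := ∑ i, yn i with hS
  have hSpos : 0 < S := Finset.sum_pos (fun i _ => hynpos i) Finset.univ_nonempty
  set fi : Fin N → (Fin N → ℝ) → ℝ := fun i z => (∑ j, p i j z) - (∑ j, d i j z) with hfi
  have hfieq : ∀ i z, fi i z = P i z - D i z := fun i z => by rw [hP i z, hD i z]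
  have hfiC2 : ∀ i, ContDiff ℝ 2 (fi i) := fun i =>
    (ContDiff.sum fun j _ => hpC2 i j).sub (ContDiff.sum fun j _ => hdC2 i j)
  set gv : Fin N → ℝ := fun j => fi j yn with hgv
  have hevT : Ev (fun t => t < T) := ev_lt hT
  -- piw lower bound
  have hπhalf : Ev (fun t => ∀ j, yn j / 2 ≤ piw t j) := by
    refine ev_forall fun j => ?_
    refine (ev_abs_le_of_bigO1 (hpiwO j)
      (show (0:ℝ) < yn j / 2 by have := hynpos j; linarith)).mono ?_
    intro t _ h
    have := abs_le.mp h
    linarith [this.1]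
  -- sigma O(t) deviation and lower bound
  have hσO1 : ∀ j, BigOAtZero (fun t => σ t j - yn j) 1 := by
    intro j
    have h1 : BigOAtZero (fun t => t * (P j yn - D j yn)) 1 := by
      have := bigO_id.mul (bigO_const (P j yn - D j yn))
      exact this
    refine bigO_congr_ev (ev_const fun t _ => ?_) (((hσO j).of_succ).add h1)
    ring
  have hσhalf : Ev (fun t => ∀ j, yn j / 2 ≤ σ t j) := by
    refine ev_forall fun j => ?_
    refine (ev_abs_le_of_bigO1 (hσO1 j)
      (show (0:ℝ) < yn j / 2 by have := hynpos j; linarith)).mono ?_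
    intro t _ h
    have := abs_le.mp h
    linarith [this.1]
  -- positivity + conservation for Y2
  have hY2coef : Ev (fun t => ∀ i, a21 * t * (∑ j, p i j yn) < yn i / 2) := by
    refine ev_forall fun i => ?_
    have hα : 0 ≤ a21 * ∑ j, p i j yn :=
      mul_nonneg ha21 (Finset.sum_nonneg fun j _ => hpnn i j yn)
    have hβ : 0 < yn i / 2 := by have := hynpos i; linarith
    refine (ev_mul_lt hα hβ).mono fun t _ h => ?_
    calc a21 * t * (∑ j, p i j yn) = (a21 * ∑ j, p i j yn) * t := by ring
      _ < yn i / 2 := h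
  have hY2PS : Ev (fun t => (∀ i, 0 < Y2 t i) ∧ ∑ i, Y2 t i = S) := by
    refine ((hevT.and hπhalf).and hY2coef).mono ?_
    rintro t ht ⟨⟨htT, hπ⟩, hcoef⟩
    have hwpos : ∀ i, 0 < piw t i := hpiwpos t ht htT
    have heq := hY2 t ht htT
    refine ⟨?_, ?_⟩
    · exact system_pos hN (mul_nonneg ha21 ht.le) (fun i j => hpnn i j yn)
        (fun i j => hdnn i j yn) hynpos hwpos
        (fun i => lt_of_lt_of_le (hcoef i) (hπ i)) heq
    · rw [hS]; exact system_sum (fun i j => hcons i j yn) heq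
  have hY2bd : Ev (fun t => ∀ i, 0 < Y2 t i ∧ Y2 t i ≤ S) := by
    refine hY2PS.mono ?_
    rintro t _ ⟨hpos, hsum⟩ i
    refine ⟨hpos i, ?_⟩
    rw [← hsum]
    exact Finset.single_le_sum (fun j _ => (hpos j).le) (Finset.mem_univ i)
  have hxbd : Ev (fun t => ∀ j, |Y2 t j / piw t j| ≤ S / (yn j / 2)) := by
    refine ((hevT.and hπhalf).and hY2bd).mono ?_
    rintro t ht ⟨⟨htT, hπ⟩, hbd⟩ j
    have hπp : 0 < piw t j := hpiwpos t ht htT j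
    have hyj2 : 0 < yn j / 2 := by have := hynpos j; linarith
    rw [abs_of_pos (div_pos (hbd j).1 hπp)]
    exact div_le_div₀ hSpos.le (hbd j).2 hyj2 (hπ j)
  -- Y2 = yn + O(t)
  have hY2O1 : ∀ i, BigOAtZero (fun t => Y2 t i - yn i) 1 := by
    intro i
    refine bigO_of_ev
      (C := a21 * ∑ j, (p i j yn * (S / (yn j / 2)) + d i j yn * (S / (yn i / 2)))) ?_
    refine (hevT.and hxbd).mono ?_
    rintro t ht ⟨htT, hx⟩
    rw [hY2 t ht htT i]
    have h1 : |∑ j, (p i j yn * Y2 t j / piw t j - d i j yn * Y2 t i / piw t i)|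
        ≤ ∑ j, (p i j yn * (S / (yn j / 2)) + d i j yn * (S / (yn i / 2))) := by
      refine (Finset.abs_sum_le_sum_abs _ _).trans (Finset.sum_le_sum fun j _ => ?_)
      refine (abs_sub _ _).trans ?_
      have e1 : |p i j yn * Y2 t j / piw t j| ≤ p i j yn * (S / (yn j / 2)) := by
        rw [mul_div_assoc, abs_mul, abs_of_nonneg (hpnn i j yn)]
        exact mul_le_mul_of_nonneg_left (hx j) (hpnn i j yn)
      have e2 : |d i j yn * Y2 t i / piw t i| ≤ d i j yn * (S / (yn i / 2)) := by
        rw [mul_div_assoc, abs_mul, abs_of_nonneg (hdnn i j yn)]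
        exact mul_le_mul_of_nonneg_left (hx i) (hdnn i j yn)
      exact add_le_add e1 e2
    calc |yn i + a21 * t * (∑ j, (p i j yn * Y2 t j / piw t j - d i j yn * Y2 t i / piw t i)) - yn i|
        = a21 * t * |∑ j, (p i j yn * Y2 t j / piw t j - d i j yn * Y2 t i / piw t i)| := by
          rw [show yn i + a21 * t * (∑ j, (p i j yn * Y2 t j / piw t j - d i j yn * Y2 t i / piw t i)) - yn i
            = a21 * t * (∑ j, (p i j yn * Y2 t j / piw t j - d i j yn * Y2 t i / piw t i)) from by ring,
            abs_mul, abs_mul, abs_of_nonneg ha21, abs_of_pos ht]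
      _ ≤ a21 * t * (∑ j, (p i j yn * (S / (yn j / 2)) + d i j yn * (S / (yn i / 2)))) :=
          mul_le_mul_of_nonneg_left h1 (mul_nonneg ha21 ht.le)
      _ = a21 * (∑ j, (p i j yn * (S / (yn j / 2)) + d i j yn * (S / (yn i / 2)))) * t ^ 1 := by ring
  -- Y2/piw - 1 = O(t)
  have hY2div : ∀ j, BigOAtZero (fun t => Y2 t j / piw t j - 1) 1 := by
    intro j
    have hnum : BigOAtZero (fun t => Y2 t j - piw t j) 1 :=
      bigO_congr_ev (ev_const fun t _ => by ring) ((hY2O1 j).sub (hpiwO j))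
    refine hnum.of_abs_le (c := 2 / yn j) ?_
    refine (hevT.and hπhalf).mono ?_
    rintro t ht ⟨htT, hπ⟩
    have hπp : 0 < piw t j := hpiwpos t ht htT j
    have hyj : 0 < yn j := hynpos j
    have h1 : Y2 t j / piw t j - 1 = (Y2 t j - piw t j) / piw t j := by field_simp
    rw [h1, abs_div, abs_of_pos hπp]
    have h2 : |Y2 t j - piw t j| / piw t j ≤ |Y2 t j - piw t j| / (yn j / 2) :=
      div_le_div_of_nonneg_left (abs_nonneg _) (by linarith) (hπ j)
    refine h2.trans (le_of_eq ?_)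
    field_simp
  -- second order expansion of Y2
  have hY2O2 : ∀ i, BigOAtZero (fun t => Y2 t i - yn i - a21 * t * fi i yn) 2 := by
    intro i
    have hsumO : BigOAtZero (fun t => ∑ j, (p i j yn * (Y2 t j / piw t j - 1)
        - d i j yn * (Y2 t i / piw t i - 1))) 1 :=
      bigO_sum fun j _ =>
        (BigOAtZero.const_mul (p i j yn) (hY2div j)).sub
          (BigOAtZero.const_mul (d i j yn) (hY2div i))
    have hmain : BigOAtZero (fun t => a21 * (t * ∑ j, (p i j yn * (Y2 t j / piw t j - 1)
        - d i j yn * (Y2 t i / piw t i - 1)))) 2 :=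
      BigOAtZero.const_mul a21 (bigO_id.mul hsumO)
    refine bigO_congr_ev ?_ hmain
    refine hevT.mono ?_
    intro t ht htT
    have hfiv : fi i yn = (∑ j, p i j yn) - (∑ j, d i j yn) := rfl
    have hexp : ∑ j, (p i j yn * (Y2 t j / piw t j - 1) - d i j yn * (Y2 t i / piw t i - 1))
        = (∑ j, (p i j yn * Y2 t j / piw t j - d i j yn * Y2 t i / piw t i))
          - ((∑ j, p i j yn) - (∑ j, d i j yn)) := by
      rw [← Finset.sum_sub_distrib, ← Finset.sum_sub_distrib]
      exact Finset.sum_congr rfl fun j _ => by ring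
    rw [hexp, hfiv]
    conv_lhs => rw [hY2 t ht htT i]
    ring
  -- Y2 eventually in any ball around yn
  have hnorm1 : BigOAtZero (fun t => ‖Y2 t - yn‖) 1 := bigO_pi_norm fun j => hY2O1 j
  have hY2ball : ∀ ρ : ℝ, 0 < ρ → Ev (fun t => Y2 t ∈ Metric.closedBall yn ρ) := by
    intro ρ hρ
    refine (ev_abs_le_of_bigO1 hnorm1 hρ).mono fun t _ h => ?_
    rw [Metric.mem_closedBall, dist_eq_norm]
    exact (le_abs_self _).trans h
  -- C² functions evaluated at Y2 differ from value at yn by O(t)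
  have hFlip : ∀ F : (Fin N → ℝ) → ℝ, ContDiff ℝ 2 F →
      BigOAtZero (fun t => F (Y2 t) - F yn) 1 := by
    intro F hF
    obtain ⟨L, hL, ρ, hρ, HF⟩ := lip_ball hF yn
    refine hnorm1.of_abs_le (c := L) ?_
    refine (hY2ball ρ hρ).mono ?_
    intro t _ hball
    have := HF (Y2 t) yn hball (Metric.mem_closedBall_self hρ.le)
    rwa [abs_of_nonneg (norm_nonneg _)]
  have hFbd : ∀ F : (Fin N → ℝ) → ℝ, ContDiff ℝ 2 F →
      Ev (fun t => |F (Y2 t)| ≤ |F yn| + 1) := by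
    intro F hF
    refine (ev_abs_le_of_bigO1 (hFlip F hF) one_pos).mono fun t _ h => ?_
    have h2 : |F (Y2 t)| - |F yn| ≤ |F (Y2 t) - F yn| := abs_sub_abs_le_abs_sub _ _
    linarith
  -- weights of the Y equation
  have hwv_nonneg : ∀ (t : ℝ) i j, 0 ≤ b1 * p i j yn + b2 * p i j (Y2 t)
      ∧ 0 ≤ b1 * d i j yn + b2 * d i j (Y2 t) := fun t i j =>
    ⟨add_nonneg (mul_nonneg hb1 (hpnn i j yn)) (mul_nonneg hb2 (hpnn i j (Y2 t))),
     add_nonneg (mul_nonneg hb1 (hdnn i j yn)) (mul_nonneg hb2 (hdnn i j (Y2 t)))⟩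
  have hwbd : Ev (fun t => ∀ i j, b1 * p i j yn + b2 * p i j (Y2 t) ≤ b1 * p i j yn + b2 * (|p i j yn| + 1)
      ∧ b1 * d i j yn + b2 * d i j (Y2 t) ≤ b1 * d i j yn + b2 * (|d i j yn| + 1)) := by
    refine ev_forall fun i => (ev_forall fun j => ?_)
    refine ((hFbd (p i j) (hpC2 i j)).and (hFbd (d i j) (hdC2 i j))).mono ?_
    rintro t _ ⟨h1, h2⟩
    have e1 : p i j (Y2 t) ≤ |p i j yn| + 1 := (le_abs_self _).trans h1
    have e2 : d i j (Y2 t) ≤ |d i j yn| + 1 := (le_abs_self _).trans h2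
    exact ⟨by nlinarith, by nlinarith⟩
  have hMwnn : ∀ i j, (0:ℝ) ≤ b1 * p i j yn + b2 * (|p i j yn| + 1) := fun i j =>
    add_nonneg (mul_nonneg hb1 (hpnn i j yn)) (mul_nonneg hb2 (by positivity))
  have hMvnn : ∀ i j, (0:ℝ) ≤ b1 * d i j yn + b2 * (|d i j yn| + 1) := fun i j =>
    add_nonneg (mul_nonneg hb1 (hdnn i j yn)) (mul_nonneg hb2 (by positivity))
  have hYcoef : Ev (fun t => ∀ i, t * (∑ j, (b1 * p i j yn + b2 * p i j (Y2 t))) < yn i / 2) := by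
    have hm : Ev (fun t => ∀ i, (∑ j, (b1 * p i j yn + b2 * (|p i j yn| + 1))) * t < yn i / 2) :=
      ev_forall fun i => ev_mul_lt (Finset.sum_nonneg fun j _ => hMwnn i j)
        (show (0:ℝ) < yn i / 2 by have := hynpos i; linarith)
    refine (hwbd.and hm).mono ?_
    rintro t ht ⟨hw, hm'⟩ i
    have h1 : ∑ j, (b1 * p i j yn + b2 * p i j (Y2 t))
        ≤ ∑ j, (b1 * p i j yn + b2 * (|p i j yn| + 1)) :=
      Finset.sum_le_sum fun j _ => (hw i j).1
    calc t * (∑ j, (b1 * p i j yn + b2 * p i j (Y2 t)))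
        ≤ t * (∑ j, (b1 * p i j yn + b2 * (|p i j yn| + 1))) :=
          mul_le_mul_of_nonneg_left h1 ht.le
      _ = (∑ j, (b1 * p i j yn + b2 * (|p i j yn| + 1))) * t := mul_comm _ _
      _ < yn i / 2 := hm' i
  have hYPS : Ev (fun t => (∀ i, 0 < Y t i) ∧ ∑ i, Y t i = S) := by
    refine ((hevT.and hσhalf).and hYcoef).mono ?_
    rintro t ht ⟨⟨htT, hσh⟩, hcoef⟩
    have hwpos : ∀ i, 0 < σ t i := hσpos t ht htT
    have heq := hY t ht htT
    refine ⟨system_pos hN ht.le (fun i j => (hwv_nonneg t i j).1)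
      (fun i j => (hwv_nonneg t i j).2) hynpos hwpos
      (fun i => lt_of_lt_of_le (hcoef i) (hσh i)) heq, ?_⟩
    rw [hS]
    refine system_sum (fun i j => ?_) heq
    rw [hcons i j yn, hcons i j (Y2 t)]
  have hYbd : Ev (fun t => ∀ i, 0 < Y t i ∧ Y t i ≤ S) := by
    refine hYPS.mono ?_
    rintro t _ ⟨hpos, hsum⟩ i
    refine ⟨hpos i, ?_⟩
    rw [← hsum]
    exact Finset.single_le_sum (fun j _ => (hpos j).le) (Finset.mem_univ i)
  have hzbd : Ev (fun t => ∀ j, |Y t j / σ t j| ≤ S / (yn j / 2)) := by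
    refine ((hevT.and hσhalf).and hYbd).mono ?_
    rintro t ht ⟨⟨htT, hσh⟩, hbd⟩ j
    have hσp : 0 < σ t j := hσpos t ht htT j
    have hyj2 : 0 < yn j / 2 := by have := hynpos j; linarith
    rw [abs_of_pos (div_pos (hbd j).1 hσp)]
    exact div_le_div₀ hSpos.le (hbd j).2 hyj2 (hσh j)
  -- Y = yn + O(t)
  have hYO1 : ∀ i, BigOAtZero (fun t => Y t i - yn i) 1 := by
    intro i
    refine bigO_of_ev (C := ∑ j, ((b1 * p i j yn + b2 * (|p i j yn| + 1)) * (S / (yn j / 2))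
      + (b1 * d i j yn + b2 * (|d i j yn| + 1)) * (S / (yn i / 2)))) ?_
    refine ((hevT.and hzbd).and hwbd).mono ?_
    rintro t ht ⟨⟨htT, hz⟩, hw⟩
    rw [hY t ht htT i]
    have h1 : |∑ j, ((b1 * p i j yn + b2 * p i j (Y2 t)) * Y t j / σ t j
          - (b1 * d i j yn + b2 * d i j (Y2 t)) * Y t i / σ t i)|
        ≤ ∑ j, ((b1 * p i j yn + b2 * (|p i j yn| + 1)) * (S / (yn j / 2))
          + (b1 * d i j yn + b2 * (|d i j yn| + 1)) * (S / (yn i / 2))) := by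
      refine (Finset.abs_sum_le_sum_abs _ _).trans (Finset.sum_le_sum fun j _ => ?_)
      refine (abs_sub _ _).trans ?_
      have e1 : |(b1 * p i j yn + b2 * p i j (Y2 t)) * Y t j / σ t j|
          ≤ (b1 * p i j yn + b2 * (|p i j yn| + 1)) * (S / (yn j / 2)) := by
        rw [mul_div_assoc, abs_mul, abs_of_nonneg (hwv_nonneg t i j).1]
        exact mul_le_mul (hw i j).1 (hz j) (abs_nonneg _) (hMwnn i j)
      have e2 : |(b1 * d i j yn + b2 * d i j (Y2 t)) * Y t i / σ t i|
          ≤ (b1 * d i j yn + b2 * (|d i j yn| + 1)) * (S / (yn i / 2)) := by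
        rw [mul_div_assoc, abs_mul, abs_of_nonneg (hwv_nonneg t i j).2]
        exact mul_le_mul (hw i j).2 (hz i) (abs_nonneg _) (hMvnn i j)
      exact add_le_add e1 e2
    set Sm := ∑ j, ((b1 * p i j yn + b2 * p i j (Y2 t)) * Y t j / σ t j
        - (b1 * d i j yn + b2 * d i j (Y2 t)) * Y t i / σ t i) with hSm
    calc |yn i + t * Sm - yn i| = t * |Sm| := by
          rw [show yn i + t * Sm - yn i = t * Sm from by ring, abs_mul, abs_of_pos ht]
      _ ≤ t * (∑ j, ((b1 * p i j yn + b2 * (|p i j yn| + 1)) * (S / (yn j / 2))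
          + (b1 * d i j yn + b2 * (|d i j yn| + 1)) * (S / (yn i / 2)))) :=
          mul_le_mul_of_nonneg_left h1 ht.le
      _ = (∑ j, ((b1 * p i j yn + b2 * (|p i j yn| + 1)) * (S / (yn j / 2))
          + (b1 * d i j yn + b2 * (|d i j yn| + 1)) * (S / (yn i / 2)))) * t ^ 1 := by ring
  -- O(t) facts about the weights
  have hwm1O : ∀ i j, BigOAtZero (fun t => b2 * (p i j (Y2 t) - p i j yn)) 1 :=
    fun i j => BigOAtZero.const_mul b2 (hFlip (p i j) (hpC2 i j))
  have hvm1O : ∀ i j, BigOAtZero (fun t => b2 * (d i j (Y2 t) - d i j yn)) 1 :=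
    fun i j => BigOAtZero.const_mul b2 (hFlip (d i j) (hdC2 i j))
  have hw0 : ∀ i j, BigOAtZero (fun t => b1 * p i j yn + b2 * p i j (Y2 t)) 0 := by
    intro i j
    refine bigO_zero_of_ev (M := b1 * p i j yn + b2 * (|p i j yn| + 1)) (hwbd.mono ?_)
    intro t ht hw
    rw [abs_of_nonneg (hwv_nonneg t i j).1]
    exact (hw i j).1
  have hv0 : ∀ i j, BigOAtZero (fun t => b1 * d i j yn + b2 * d i j (Y2 t)) 0 := by
    intro i j
    refine bigO_zero_of_ev (M := b1 * d i j yn + b2 * (|d i j yn| + 1)) (hwbd.mono ?_)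
    intro t ht hw
    rw [abs_of_nonneg (hwv_nonneg t i j).2]
    exact (hw i j).2
  -- Y/σ - 1 = O(t)
  have hz1 : ∀ j, BigOAtZero (fun t => Y t j / σ t j - 1) 1 := by
    intro j
    have hnum : BigOAtZero (fun t => Y t j - σ t j) 1 :=
      bigO_congr_ev (ev_const fun t _ => by ring) ((hYO1 j).sub (hσO1 j))
    refine hnum.of_abs_le (c := 2 / yn j) ?_
    refine (hevT.and hσhalf).mono ?_
    rintro t ht ⟨htT, hσh⟩
    have hσp : 0 < σ t j := hσpos t ht htT j
    have hyj : 0 < yn j := hynpos j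
    have h1 : Y t j / σ t j - 1 = (Y t j - σ t j) / σ t j := by field_simp
    rw [h1, abs_div, abs_of_pos hσp]
    have h2 : |Y t j - σ t j| / σ t j ≤ |Y t j - σ t j| / (yn j / 2) :=
      div_le_div_of_nonneg_left (abs_nonneg _) (by linarith) (hσh j)
    refine h2.trans (le_of_eq ?_)
    field_simp
  -- second-order expansion of Y
  have hYO2 : ∀ i, BigOAtZero (fun t => Y t i - yn i - t * fi i yn) 2 := by
    intro i
    have hsumO : BigOAtZero (fun t => ∑ j,
        ((b1 * p i j yn + b2 * p i j (Y2 t)) * (Y t j / σ t j - 1)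
        - (b1 * d i j yn + b2 * d i j (Y2 t)) * (Y t i / σ t i - 1)
        + b2 * (p i j (Y2 t) - p i j yn) - b2 * (d i j (Y2 t) - d i j yn))) 1 :=
      bigO_sum fun j _ =>
        ((((hw0 i j).mul (hz1 j)).sub ((hv0 i j).mul (hz1 i))).add (hwm1O i j)).sub (hvm1O i j)
    refine bigO_congr_ev ?_ (bigO_id.mul hsumO)
    refine hevT.mono ?_
    intro t ht htT
    have hfiv : fi i yn = (∑ j, p i j yn) - (∑ j, d i j yn) := rfl
    have hexp : ∑ j, ((b1 * p i j yn + b2 * p i j (Y2 t)) * (Y t j / σ t j - 1)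
        - (b1 * d i j yn + b2 * d i j (Y2 t)) * (Y t i / σ t i - 1)
        + b2 * (p i j (Y2 t) - p i j yn) - b2 * (d i j (Y2 t) - d i j yn))
        = (∑ j, ((b1 * p i j yn + b2 * p i j (Y2 t)) * Y t j / σ t j
          - (b1 * d i j yn + b2 * d i j (Y2 t)) * Y t i / σ t i))
          - ((∑ j, p i j yn) - (∑ j, d i j yn)) := by
      rw [← Finset.sum_sub_distrib, ← Finset.sum_sub_distrib]
      refine Finset.sum_congr rfl fun j _ => ?_
      linear_combination (d i j yn - p i j yn) * hbsum
    show Y t i - yn i - t * fi i yn = t * ∑ j,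
        ((b1 * p i j yn + b2 * p i j (Y2 t)) * (Y t j / σ t j - 1)
        - (b1 * d i j yn + b2 * d i j (Y2 t)) * (Y t i / σ t i - 1)
        + b2 * (p i j (Y2 t) - p i j yn) - b2 * (d i j (Y2 t) - d i j yn))
    rw [hexp, hfiv]
    conv_lhs => rw [hY t ht htT i]
    ring
  -- Y - σ = O(t²), so Y/σ - 1 = O(t²)
  have hσfi : ∀ j, BigOAtZero (fun t => σ t j - yn j - t * fi j yn) 2 :=
    fun j => bigO_congr_ev (ev_const fun t _ => by rw [hfieq j yn]; ring) (hσO j)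
  have hYσ2 : ∀ j, BigOAtZero (fun t => Y t j - σ t j) 2 :=
    fun j => bigO_congr_ev (ev_const fun t _ => by ring) ((hYO2 j).sub (hσfi j))
  have hz2 : ∀ j, BigOAtZero (fun t => Y t j / σ t j - 1) 2 := by
    intro j
    refine (hYσ2 j).of_abs_le (c := 2 / yn j) ?_
    refine (hevT.and hσhalf).mono ?_
    rintro t ht ⟨htT, hσh⟩
    have hσp : 0 < σ t j := hσpos t ht htT j
    have hyj : 0 < yn j := hynpos j
    have h1 : Y t j / σ t j - 1 = (Y t j - σ t j) / σ t j := by field_simp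
    rw [h1, abs_div, abs_of_pos hσp]
    have h2 : |Y t j - σ t j| / σ t j ≤ |Y t j - σ t j| / (yn j / 2) :=
      div_le_div_of_nonneg_left (abs_nonneg _) (by linarith) (hσh j)
    refine h2.trans (le_of_eq ?_)
    field_simp
  -- third-order reduction of the Y equation
  have hYfinal : ∀ i, BigOAtZero
      (fun t => Y t i - yn i - t * (b1 * fi i yn + b2 * fi i (Y2 t))) 3 := by
    intro i
    have hsumO : BigOAtZero (fun t => ∑ j,
        ((b1 * p i j yn + b2 * p i j (Y2 t)) * (Y t j / σ t j - 1)
        - (b1 * d i j yn + b2 * d i j (Y2 t)) * (Y t i / σ t i - 1))) 2 :=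
      bigO_sum fun j _ => ((hw0 i j).mul (hz2 j)).sub ((hv0 i j).mul (hz2 i))
    refine bigO_congr_ev ?_ (bigO_id.mul hsumO)
    refine hevT.mono ?_
    intro t ht htT
    have hsplit : b1 * fi i yn + b2 * fi i (Y2 t)
        = ∑ j, ((b1 * p i j yn + b2 * p i j (Y2 t)) - (b1 * d i j yn + b2 * d i j (Y2 t))) := by
      have hrhs : ∑ j, ((b1 * p i j yn + b2 * p i j (Y2 t)) - (b1 * d i j yn + b2 * d i j (Y2 t)))
          = (b1 * ∑ j, p i j yn + b2 * ∑ j, p i j (Y2 t))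
            - (b1 * ∑ j, d i j yn + b2 * ∑ j, d i j (Y2 t)) := by
        rw [Finset.sum_sub_distrib, Finset.sum_add_distrib, Finset.sum_add_distrib,
          Finset.mul_sum, Finset.mul_sum, Finset.mul_sum, Finset.mul_sum]
      rw [hrhs, show fi i yn = (∑ j, p i j yn) - (∑ j, d i j yn) from rfl,
        show fi i (Y2 t) = (∑ j, p i j (Y2 t)) - (∑ j, d i j (Y2 t)) from rfl]
      ring
    have hexp : ∑ j, ((b1 * p i j yn + b2 * p i j (Y2 t)) * (Y t j / σ t j - 1)
        - (b1 * d i j yn + b2 * d i j (Y2 t)) * (Y t i / σ t i - 1))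
        = (∑ j, ((b1 * p i j yn + b2 * p i j (Y2 t)) * Y t j / σ t j
          - (b1 * d i j yn + b2 * d i j (Y2 t)) * Y t i / σ t i))
          - ∑ j, ((b1 * p i j yn + b2 * p i j (Y2 t)) - (b1 * d i j yn + b2 * d i j (Y2 t))) := by
      rw [← Finset.sum_sub_distrib]
      exact Finset.sum_congr rfl fun j _ => by ring
    show Y t i - yn i - t * (b1 * fi i yn + b2 * fi i (Y2 t)) = t * ∑ j,
        ((b1 * p i j yn + b2 * p i j (Y2 t)) * (Y t j / σ t j - 1)
        - (b1 * d i j yn + b2 * d i j (Y2 t)) * (Y t i / σ t i - 1))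
    rw [hexp, hsplit]
    conv_lhs => rw [hY t ht htT i]
    ring
  -- quadratic expansion of fi at Y2
  have hquad : ∀ i, BigOAtZero
      (fun t => fi i (Y2 t) - fi i yn - a21 * t * (fderiv ℝ (fi i) yn gv)) 2 := by
    intro i
    obtain ⟨L, hL, ρ, hρ, HQ⟩ := quad_approx (hfiC2 i) yn
    have hterm1 : BigOAtZero
        (fun t => fi i (Y2 t) - fi i yn - fderiv ℝ (fi i) yn (Y2 t - yn)) 2 := by
      refine (hnorm1.mul hnorm1).of_abs_le (c := L) ?_
      refine (hY2ball ρ hρ).mono ?_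
      intro t _ hball
      refine (HQ (Y2 t) hball).trans (le_of_eq ?_)
      rw [abs_mul, abs_of_nonneg (norm_nonneg _)]
      ring
    have hV2 : BigOAtZero (fun t => ‖Y2 t - yn - (a21 * t) • gv‖) 2 :=
      bigO_pi_norm fun j => hY2O2 j
    have hterm2 : BigOAtZero
        (fun t => fderiv ℝ (fi i) yn (Y2 t - yn) - a21 * t * (fderiv ℝ (fi i) yn gv)) 2 := by
      refine hV2.of_abs_le (c := ‖fderiv ℝ (fi i) yn‖) (ev_const fun t _ => ?_)
      have heqv : fderiv ℝ (fi i) yn (Y2 t - yn) - a21 * t * (fderiv ℝ (fi i) yn gv)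
          = fderiv ℝ (fi i) yn (Y2 t - yn - (a21 * t) • gv) := by
        simp only [map_sub, map_smul, smul_eq_mul]
        try ring
      rw [heqv, abs_of_nonneg (norm_nonneg (Y2 t - yn - (a21 * t) • gv))]
      calc |fderiv ℝ (fi i) yn (Y2 t - yn - (a21 * t) • gv)|
          = ‖fderiv ℝ (fi i) yn (Y2 t - yn - (a21 * t) • gv)‖ := (Real.norm_eq_abs _).symm
        _ ≤ ‖fderiv ℝ (fi i) yn‖ * ‖Y2 t - yn - (a21 * t) • gv‖ :=
            ContinuousLinearMap.le_opNorm _ _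
    exact bigO_congr_ev (ev_const fun t _ => by ring) (hterm1.add hterm2)
  -- full scheme-side expansion
  have hscheme : ∀ i, BigOAtZero (fun t => Y t i - yn i - t * fi i yn
      - t ^ 2 / 2 * (fderiv ℝ (fi i) yn gv)) 3 := by
    intro i
    have h2 : BigOAtZero (fun t => t * (b2 * (fi i (Y2 t) - fi i yn
        - a21 * t * (fderiv ℝ (fi i) yn gv)))) 3 :=
      bigO_id.mul (BigOAtZero.const_mul b2 (hquad i))
    refine bigO_congr_ev (ev_const fun t _ => ?_) ((hYfinal i).add h2)
    linear_combination (t * fi i yn) * hbsum + (t ^ 2 * (fderiv ℝ (fi i) yn gv)) * hab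
  -- ODE side
  set g : (Fin N → ℝ) → (Fin N → ℝ) := fun z j => fi j z with hg
  have hgC1 : ContDiff ℝ 1 g := contDiff_pi.mpr fun j => (hfiC2 j).of_le one_le_two
  have hIccT : tn ∈ Set.Icc tn (tn + T) := Set.left_mem_Icc.mpr (by linarith)
  have hyvec : ∀ t ∈ Set.Icc tn (tn + T),
      HasDerivWithinAt y (g (y t)) (Set.Icc tn (tn + T)) t := by
    intro t ht
    refine hasDerivWithinAt_pi.mpr fun j => ?_
    have h0 := hy j t ht
    rw [← hfieq j (y t)] at h0
    exact h0
  obtain ⟨Mg, hMg⟩ := (isCompact_closedBall yn 1).exists_bound_of_continuousOn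
    (hgC1.continuous.continuousOn)
  have hMg0 : 0 ≤ Mg :=
    le_trans (norm_nonneg _) (hMg yn (Metric.mem_closedBall_self zero_le_one))
  have hode : ∀ i, BigOAtZero (fun t => y (tn + t) i - yn i - t * fi i yn
      - t ^ 2 / 2 * (fderiv ℝ (fi i) yn gv)) 3 := by
    intro i
    set H : (Fin N → ℝ) → ℝ := fun z => fderiv ℝ (fi i) z (g z) with hH
    have hHC1 : ContDiff ℝ 1 H :=
      ContDiff.clm_apply ((hfiC2 i).fderiv_right (by norm_num)) hgC1
    obtain ⟨LH, sH, hsH, hlipH⟩ := hHC1.contDiffAt.exists_lipschitzOnWith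
    obtain ⟨εH, hεH, hballH⟩ := Metric.mem_nhds_iff.mp hsH
    set ρ : ℝ := min (εH / 2) 1 with hρdef
    have hρ : 0 < ρ := lt_min (by linarith) one_pos
    have hcont : ContinuousWithinAt y (Set.Icc tn (tn + T)) tn :=
      (hyvec tn hIccT).continuousWithinAt
    obtain ⟨δy, hδy, hcy⟩ := Metric.continuousWithinAt_iff.mp hcont ρ hρ
    refine bigO_of_ev (C := (LH : ℝ) * Mg) ?_
    refine (hevT.and (ev_lt hδy)).mono ?_
    rintro t ht ⟨htT, htδ⟩
    set s := Set.Icc tn (tn + t) with hs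
    have hsub : s ⊆ Set.Icc tn (tn + T) := Set.Icc_subset_Icc le_rfl (by linarith)
    have hmem : ∀ u ∈ s, ‖y u - yn‖ ≤ ρ ∧ y u ∈ Metric.closedBall yn 1 := by
      intro u hu
      have hu1 : u ∈ Set.Icc tn (tn + T) := hsub hu
      have hdu : dist u tn < δy := by
        rw [Real.dist_eq, abs_of_nonneg (by linarith [hu.1])]
        have := hu.2
        linarith
      have h2 := hcy hu1 hdu
      rw [hyn, dist_eq_norm] at h2
      exact ⟨h2.le, Metric.mem_closedBall.mpr
        (by rw [dist_eq_norm]; exact h2.le.trans (min_le_right _ _))⟩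
    have hyd : ∀ u ∈ s, HasDerivWithinAt y (g (y u)) s u :=
      fun u hu => (hyvec u (hsub hu)).mono hsub
    have hylip : ∀ u ∈ s, ‖y u - yn‖ ≤ Mg * (u - tn) := by
      intro u hu
      have hbound : ∀ v ∈ s, ‖g (y v)‖ ≤ Mg := fun v hv => hMg _ (hmem v hv).2
      have h3 := Convex.norm_image_sub_le_of_norm_hasDerivWithin_le hyd hbound
        (convex_Icc _ _) (Set.left_mem_Icc.mpr (by linarith)) hu
      rw [hyn] at h3
      rwa [Real.norm_eq_abs, abs_of_nonneg (by linarith [hu.1] : (0:ℝ) ≤ u - tn)] at h3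
    have hynball : yn ∈ sH := hballH (Metric.mem_ball_self hεH)
    have hχb : ∀ u ∈ s, |H (y u) - H (y tn)| ≤ (LH : ℝ) * Mg * t := by
      intro u hu
      have h1 : y u ∈ sH := by
        refine hballH (Metric.mem_ball.mpr ?_)
        rw [dist_eq_norm]
        calc ‖y u - yn‖ ≤ ρ := (hmem u hu).1
          _ ≤ εH / 2 := min_le_left _ _
          _ < εH := by linarith
      have h2 := hlipH.dist_le_mul (y u) h1 (y tn) (by rw [hyn]; exact hynball)
      rw [dist_eq_norm, dist_eq_norm, hyn, Real.norm_eq_abs] at h2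
      rw [hyn]
      refine h2.trans ?_
      have h4 : ‖y u - yn‖ ≤ Mg * (u - tn) := hylip u hu
      have h5 : Mg * (u - tn) ≤ Mg * t := by
        have := hu.2
        have := hu.1
        refine mul_le_mul_of_nonneg_left (by linarith) hMg0
      have h6 := (h4.trans h5)
      calc (LH : ℝ) * ‖y u - yn‖ ≤ (LH : ℝ) * (Mg * t) :=
            mul_le_mul_of_nonneg_left h6 LH.coe_nonneg
        _ = (LH : ℝ) * Mg * t := by ring
    have hφd : ∀ u ∈ s, HasDerivWithinAt (fun v => y v i) (fi i (y u)) s u := by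
      intro u hu
      have h0 := (hy i u (hsub hu)).mono hsub
      rw [← hfieq i (y u)] at h0
      exact h0
    have hψd : ∀ u ∈ s, HasDerivWithinAt (fun v => fi i (y v)) (H (y u)) s u := by
      intro u hu
      have hF : HasFDerivAt (fi i) (fderiv ℝ (fi i) (y u)) (y u) :=
        (((hfiC2 i).differentiable (by norm_num)) (y u)).hasFDerivAt
      exact hF.comp_hasDerivWithinAt u (hyd u hu)
    have htay := taylor2_bound (φ := fun u => y u i) (ψ := fun u => fi i (y u))
      (χ := fun u => H (y u)) (a := tn) (Δt := t) ht
      (by positivity) hφd hψd hχb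
    have hχa : H (y tn) = fderiv ℝ (fi i) yn gv := by rw [hyn]
    have hψa : fi i (y tn) = fi i yn := by rw [hyn]
    have hya : y tn i = yn i := by rw [hyn]
    rw [hψa, hχa, hya] at htay
    calc |y (tn + t) i - yn i - t * fi i yn - t ^ 2 / 2 * (fderiv ℝ (fi i) yn gv)|
        ≤ (LH : ℝ) * Mg * t * t ^ 2 := htay
      _ = (LH : ℝ) * Mg * t ^ 3 := by ring
  -- combine
  intro i
  refine bigO_congr_ev (ev_const fun t _ => ?_) ((hscheme i).sub (hode i))
  ring
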